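/- arXiv:2109.14943 — 4 statements merged into one kernel-verified Lean document; each statement's English description precedes it below -/
import Mathlib

section
/- Let S be the interpolation matrix of the FLRS decoder with degree constraint D, built from a received word R = C + E where the error E has sum-rank weight t. Then rk_{q^m}(S) ≤ D + t(h−s+1), and hence the dimension d_I of the right kernel of S satisfies d_I ≥ s(D−k+1) − t(h−s+1). -/
open Polynomial

noncomputable section

variable {F : Type*} [Field F]

/-- Powers of the generalized operator: `(a∘)^i b = σ^i(b)·σ^{i-1}(a)⋯σ(a)·a`. -/
def opPow (σ : F → F) (a b : F) : ℕ → F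
  | 0 => b
  | i + 1 => σ (opPow σ a b i) * a

/-- Generalized operator evaluation of a (skew) polynomial: `f(b)_a = Σ_i f_i (a∘)^i b`. -/
def opEval (σ : F → F) (f : Polynomial F) (a b : F) : F :=
  ∑ i ∈ f.support, f.coeff i * opPow σ a b i

/-- σ-conjugacy: `b = σ(c)·a·c⁻¹` for some nonzero `c`. -/
def IsSkewConj (σ : F → F) (a b : F) : Prop :=
  ∃ c : F, c ≠ 0 ∧ σ c * a * c⁻¹ = b

/-- `rk_q`: the maximal number of `K`-linearly independent columns of a matrix over `F ⊇ K`,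
i.e. the `K`-dimension of the `K`-span of the columns. -/
def rankq (K : Type*) {F : Type*} [Field K] [Field F] [Algebra K F]
    {h c : ℕ} (M : Matrix (Fin h) (Fin c) F) : ℕ :=
  Module.finrank K (Submodule.span K (Set.range fun j => fun r => M r j))

/-- The `i`-th block of the `h`-folded linearized Reed–Solomon codeword for message `f`:
entry `(r, c)` is `f(β^{c·h + r})_{a_i}` (0-indexed). -/
def flrsWord {K F : Type*} [Field K] [Field F] [Algebra K F]
    (σ : F ≃ₐ[K] F) (β : F) {ℓ : ℕ} (h Ni : ℕ) (a : Fin ℓ → F)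
    (f : Polynomial F) (i : Fin ℓ) : Matrix (Fin h) (Fin Ni) F :=
  Matrix.of fun r c => opEval (⇑σ) f (a i) (β ^ ((c : ℕ) * h + (r : ℕ)))

namespace FLRSAux

variable {K F₀ : Type*} [Field K] [Field F₀] [Algebra K F₀]

lemma opPow_zero_left (σ : F₀ ≃ₐ[K] F₀) (a : F₀) (i : ℕ) : opPow ⇑σ a 0 i = 0 := by
  induction i with
  | zero => rfl
  | succ i ih => simp [opPow, ih]

lemma opPow_add_left (σ : F₀ ≃ₐ[K] F₀) (a b₁ b₂ : F₀) (i : ℕ) :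
    opPow ⇑σ a (b₁ + b₂) i = opPow ⇑σ a b₁ i + opPow ⇑σ a b₂ i := by
  induction i with
  | zero => rfl
  | succ i ih => simp [opPow, ih, map_add, add_mul]

lemma opPow_mul_left (σ : F₀ ≃ₐ[K] F₀) (a x b : F₀) (i : ℕ) :
    opPow ⇑σ a (x * b) i = (⇑σ)^[i] x * opPow ⇑σ a b i := by
  induction i with
  | zero => rfl
  | succ i ih =>
      simp only [opPow, ih, map_mul, Function.iterate_succ_apply', mul_assoc]

lemma opPow_smul_left (σ : F₀ ≃ₐ[K] F₀) (a : F₀) (c : K) (b : F₀) (i : ℕ) :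
    opPow ⇑σ a (c • b) i = c • opPow ⇑σ a b i := by
  rw [Algebra.smul_def, Algebra.smul_def, opPow_mul_left]
  congr 1
  induction i with
  | zero => rfl
  | succ i ih => rw [Function.iterate_succ_apply', ih, AlgEquiv.commutes]

lemma opPow_sum_left (σ : F₀ ≃ₐ[K] F₀) (a : F₀) {ι : Type*} (s : Finset ι) (g : ι → F₀)
    (i : ℕ) : opPow ⇑σ a (∑ x ∈ s, g x) i = ∑ x ∈ s, opPow ⇑σ a (g x) i := by
  induction s using Finset.cons_induction with
  | empty => simp [opPow_zero_left]
  | cons x s hx ih => simp [Finset.sum_cons, opPow_add_left, ih]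

lemma opPow_opPow (σ : F₀ ≃ₐ[K] F₀) (a b : F₀) (d c : ℕ) :
    opPow ⇑σ a (opPow ⇑σ a b d) c = opPow ⇑σ a b (d + c) := by
  induction c with
  | zero => rfl
  | succ c ih => rw [Nat.add_succ]; simp only [opPow, ih]; rfl

lemma opPow_opEval (σ : F₀ ≃ₐ[K] F₀) (a : F₀) (f : Polynomial F₀) (b : F₀) (c : ℕ) :
    opPow ⇑σ a (opEval ⇑σ f a b) c
      = ∑ d ∈ f.support, (⇑σ)^[c] (f.coeff d) * opPow ⇑σ a b (d + c) := by
  unfold opEval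
  rw [opPow_sum_left]
  refine Finset.sum_congr rfl fun d _ => ?_
  rw [opPow_mul_left, opPow_opPow]

lemma matrix_rank_add_le {m n : Type*} [Fintype n] {F : Type*} [Field F]
    (A B : Matrix m n F) : (A + B).rank ≤ A.rank + B.rank := by
  have hr : LinearMap.range (A + B).mulVecLin ≤
      LinearMap.range A.mulVecLin ⊔ LinearMap.range B.mulVecLin := by
    rintro _ ⟨x, rfl⟩
    rw [Matrix.mulVecLin_add]
    exact Submodule.mem_sup.mpr ⟨A.mulVecLin x, ⟨x, rfl⟩, B.mulVecLin x, ⟨x, rfl⟩, rfl⟩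
  calc (A + B).rank
      = Module.finrank F (LinearMap.range (A + B).mulVecLin) := rfl
    _ ≤ Module.finrank F ↥(LinearMap.range A.mulVecLin ⊔ LinearMap.range B.mulVecLin) :=
        Submodule.finrank_mono hr
    _ ≤ A.rank + B.rank := Submodule.finrank_add_le_finrank_add_finrank _ _

end FLRSAux

open FLRSAux in
theorem stmt7 {K F : Type*} [Field K] [Field F] [Algebra K F] [Finite F]
    (σ : F ≃ₐ[K] F) (β : F) (ℓ h Ni s k t D : ℕ)
    (hs1 : 1 ≤ s) (hsh : s ≤ h) (hk1 : 1 ≤ k) (hkD : k ≤ D)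
    (hDle : D ≤ ℓ * Ni * (h - s + 1))
    (hβ : ∀ x : F, x ≠ 0 → ∃ j : ℕ, β ^ j = x)
    (hloc : LinearIndependent K (fun w : Fin (Ni * h) => β ^ (w : ℕ)))
    (a : Fin ℓ → F) (ha0 : ∀ i, a i ≠ 0)
    (haconj : ∀ i j, i ≠ j → ¬ IsSkewConj (⇑σ) (a i) (a j))
    (f : Polynomial F) (hfdeg : f.natDegree < k)
    (E : Fin ℓ → Matrix (Fin h) (Fin Ni) F)
    (hE : ∑ i, rankq K (E i) = t)
    -- the received word `R = C + E`
    (R : Fin ℓ → Matrix (Fin h) (Fin Ni) F)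
    (hR : ∀ i, R i = flrsWord σ β h Ni a f i + E i)
    -- `S` is the interpolation matrix: rows indexed by the interpolation points
    -- `((i, j), l)`, columns by `Fin D ⊕ Fin s × Fin (D - k + 1)`, whose column
    -- groups are the transposed generalized Moore matrices of `p_0, p_1, …, p_s`
    (S : Matrix ((Fin ℓ × Fin Ni) × Fin (h - s + 1)) (Fin D ⊕ Fin s × Fin (D - k + 1)) F)
    (hS : ∀ (i : Fin ℓ) (j : Fin Ni) (l : Fin (h - s + 1)) (c : Fin D ⊕ Fin s × Fin (D - k + 1)),
      S ((i, j), l) c = Sum.elim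
        (fun cd : Fin D => opPow (⇑σ) (a i) (β ^ ((j : ℕ) * h + (l : ℕ))) (cd : ℕ))
        (fun rc : Fin s × Fin (D - k + 1) => opPow (⇑σ) (a i)
          (R i ⟨(l : ℕ) + (rc.1 : ℕ), by have := l.isLt; have := rc.1.isLt; omega⟩ j)
          (rc.2 : ℕ)) c) :
    S.rank ≤ D + t * (h - s + 1) ∧
    s * (D - k + 1) ≤ Module.finrank F (LinearMap.ker S.mulVecLin) + t * (h - s + 1) := by
  classical
  -- decomposition of the error blocks through bases of their column spans
  let Wsp : Fin ℓ → Submodule K (Fin h → F) :=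
    fun i => Submodule.span K (Set.range fun j : Fin Ni => fun r => E i r j)
  have hWfin : ∀ i, Module.Finite K (Wsp i) := fun i =>
    Module.Finite.iff_fg.mpr (Submodule.fg_span (Set.finite_range _))
  let bas : (i : Fin ℓ) → Module.Basis (Fin (rankq K (E i))) K (Wsp i) := fun i =>
    letI := hWfin i
    Module.finBasis K (Wsp i)
  have hcolmem : ∀ (i : Fin ℓ) (j : Fin Ni), (fun r => E i r j) ∈ Wsp i :=
    fun i j => Submodule.subset_span ⟨j, rfl⟩
  let B : (i : Fin ℓ) → Fin (rankq K (E i)) → Fin Ni → K :=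
    fun i m j => (bas i).repr ⟨fun r => E i r j, hcolmem i j⟩ m
  have hEdec : ∀ (i : Fin ℓ) (j : Fin Ni) (r : Fin h),
      E i r j = ∑ m, B i m j • ((bas i m : Fin h → F) r) := by
    intro i j r
    have h1 := (bas i).sum_repr ⟨fun r => E i r j, hcolmem i j⟩
    have h2 := congrArg (fun w : Wsp i => (w : Fin h → F) r) h1
    simp only [AddSubmonoidClass.coe_finset_sum, SetLike.val_smul, Finset.sum_apply,
      Pi.smul_apply] at h2
    exact h2.symm
  -- the four matrices of the factorization `S = U * V + P * Q`
  let U : Matrix ((Fin ℓ × Fin Ni) × Fin (h - s + 1)) (Fin D) F :=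
    fun row cd => opPow ⇑σ (a row.1.1) (β ^ ((row.1.2 : ℕ) * h + (row.2 : ℕ))) (cd : ℕ)
  let V : Matrix (Fin D) (Fin D ⊕ Fin s × Fin (D - k + 1)) F :=
    fun cd col => Sum.elim (fun cd' : Fin D => if cd = cd' then (1 : F) else 0)
      (fun rc : Fin s × Fin (D - k + 1) => ∑ d ∈ f.support,
        if (cd : ℕ) = d + (rc.2 : ℕ) then
          (⇑σ)^[(rc.2 : ℕ)] (f.coeff d) * (⇑σ)^[d + (rc.2 : ℕ)] (β ^ (rc.1 : ℕ))
        else 0) col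
  let I' := (i : Fin ℓ) × (Fin (rankq K (E i)) × Fin (h - s + 1))
  let P : Matrix ((Fin ℓ × Fin Ni) × Fin (h - s + 1)) I' F :=
    fun row idx => if idx.1 = row.1.1 ∧ idx.2.2 = row.2
      then algebraMap K F (B idx.1 idx.2.1 row.1.2) else 0
  let Q : Matrix I' (Fin D ⊕ Fin s × Fin (D - k + 1)) F :=
    fun idx col => Sum.elim (fun _ => (0 : F))
      (fun rc : Fin s × Fin (D - k + 1) => opPow ⇑σ (a idx.1)
        ((bas idx.1 idx.2.1 : Fin h → F)
          ⟨(idx.2.2 : ℕ) + (rc.1 : ℕ),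
            by have := idx.2.2.isLt; have := rc.1.isLt; omega⟩) (rc.2 : ℕ)) col
  have hkey : ∀ d ∈ f.support, ∀ c : Fin (D - k + 1), d + (c : ℕ) < D := by
    intro d hd c
    have h1 := Polynomial.le_natDegree_of_mem_supp d hd
    have h2 := c.isLt
    omega
  have hSeq : S = U * V + P * Q := by
    ext ⟨⟨i, j⟩, l⟩ col
    rcases col with cd | ⟨r, c⟩
    · rw [hS]
      rw [Matrix.add_apply, Matrix.mul_apply, Matrix.mul_apply]
      have hQ0 : ∀ idx : I', P ((i, j), l) idx * Q idx (Sum.inl cd) = 0 := fun idx => by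
        simp [Q]
      rw [Finset.sum_eq_zero fun idx _ => hQ0 idx, add_zero]
      simp only [Sum.elim_inl, U, V, mul_ite, mul_one, mul_zero]
      rw [Finset.sum_ite_eq' Finset.univ cd]
      simp
    · rw [hS]
      simp only [Sum.elim_inr]
      have pf : (l : ℕ) + (r : ℕ) < h := by
        have := l.isLt; have := r.isLt; omega
      have hUV : ∑ x : Fin D, U ((i, j), l) x * V x (Sum.inr (r, c))
          = opPow ⇑σ (a i) (flrsWord σ β h Ni a f i ⟨(l : ℕ) + (r : ℕ), pf⟩ j) (c : ℕ) := by
        rw [show flrsWord σ β h Ni a f i ⟨(l : ℕ) + (r : ℕ), pf⟩ j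
            = opEval ⇑σ f (a i) (β ^ ((j : ℕ) * h + ((l : ℕ) + (r : ℕ)))) from rfl]
        rw [opPow_opEval]
        simp only [U, V, Sum.elim_inr, Finset.mul_sum]
        rw [Finset.sum_comm]
        refine Finset.sum_congr rfl fun d hd => ?_
        have hdc : d + (c : ℕ) < D := hkey d hd c
        have hite : ∀ cd' : Fin D,
            (opPow ⇑σ (a i) (β ^ ((j : ℕ) * h + (l : ℕ))) (cd' : ℕ) *
              if (cd' : ℕ) = d + (c : ℕ) then
                (⇑σ)^[(c : ℕ)] (f.coeff d) * (⇑σ)^[d + (c : ℕ)] (β ^ (r : ℕ)) else 0)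
            = if cd' = (⟨d + (c : ℕ), hdc⟩ : Fin D) then
                opPow ⇑σ (a i) (β ^ ((j : ℕ) * h + (l : ℕ))) (cd' : ℕ) *
                ((⇑σ)^[(c : ℕ)] (f.coeff d) * (⇑σ)^[d + (c : ℕ)] (β ^ (r : ℕ))) else 0 := by
          intro cd'
          by_cases hcd : (cd' : ℕ) = d + (c : ℕ)
          · rw [if_pos hcd, if_pos (Fin.ext hcd)]
          · rw [if_neg hcd, if_neg fun hh => hcd (congrArg Fin.val hh), mul_zero]
        rw [Finset.sum_congr rfl fun cd' _ => hite cd']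
        rw [Finset.sum_ite_eq' Finset.univ]
        simp only [Finset.mem_univ, if_true, Fin.val_mk]
        have hexp : β ^ ((j : ℕ) * h + ((l : ℕ) + (r : ℕ)))
            = β ^ (r : ℕ) * β ^ ((j : ℕ) * h + (l : ℕ)) := by
          rw [← pow_add]; congr 1; omega
        rw [hexp, opPow_mul_left]
        ring
      have hPQ : ∑ idx : I', P ((i, j), l) idx * Q idx (Sum.inr (r, c))
          = opPow ⇑σ (a i) (E i ⟨(l : ℕ) + (r : ℕ), pf⟩ j) (c : ℕ) := by
        calc ∑ idx : I', P ((i, j), l) idx * Q idx (Sum.inr (r, c))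
            = ∑ i' : Fin ℓ, ∑ p : Fin (rankq K (E i')) × Fin (h - s + 1),
                P ((i, j), l) ⟨i', p⟩ * Q ⟨i', p⟩ (Sum.inr (r, c)) := by
              rw [← Finset.univ_sigma_univ, Finset.sum_sigma]
          _ = ∑ p : Fin (rankq K (E i)) × Fin (h - s + 1),
                P ((i, j), l) ⟨i, p⟩ * Q ⟨i, p⟩ (Sum.inr (r, c)) := by
              refine Finset.sum_eq_single_of_mem i (Finset.mem_univ i) ?_
              intro i' _ hi'
              refine Finset.sum_eq_zero fun p _ => ?_
              simp [P, hi']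
          _ = ∑ m : Fin (rankq K (E i)), ∑ l' : Fin (h - s + 1),
                P ((i, j), l) ⟨i, (m, l')⟩ * Q ⟨i, (m, l')⟩ (Sum.inr (r, c)) := by
              rw [Fintype.sum_prod_type]
          _ = ∑ m : Fin (rankq K (E i)),
                B i m j • opPow ⇑σ (a i) ((bas i m : Fin h → F)
                  ⟨(l : ℕ) + (r : ℕ), pf⟩) (c : ℕ) := by
              refine Finset.sum_congr rfl fun m _ => ?_
              rw [Finset.sum_eq_single_of_mem l (Finset.mem_univ l)]
              · simp [P, Q, Algebra.smul_def]
              · intro l' _ hl'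
                simp [P, hl']
          _ = opPow ⇑σ (a i) (E i ⟨(l : ℕ) + (r : ℕ), pf⟩ j) (c : ℕ) := by
              rw [hEdec i j ⟨(l : ℕ) + (r : ℕ), pf⟩, opPow_sum_left]
              exact Finset.sum_congr rfl fun m _ => (opPow_smul_left σ (a i) _ _ _).symm
      rw [hR i, Matrix.add_apply, opPow_add_left, Matrix.add_apply, Matrix.mul_apply,
        Matrix.mul_apply, hUV, hPQ]
  -- rank bounds
  have hUb : U.rank ≤ D := le_trans (Matrix.rank_le_card_width U) (by simp)
  have hQb : Q.rank ≤ t * (h - s + 1) := by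
    refine le_trans (Matrix.rank_le_card_height Q) ?_
    have : Fintype.card I' = t * (h - s + 1) := by
      rw [Fintype.card_sigma]
      simp only [Fintype.card_prod, Fintype.card_fin]
      rw [← Finset.sum_mul, hE]
    rw [this]
  have hrS : S.rank ≤ D + t * (h - s + 1) := by
    rw [hSeq]
    calc (U * V + P * Q).rank ≤ (U * V).rank + (P * Q).rank := matrix_rank_add_le _ _
      _ ≤ U.rank + Q.rank :=
        add_le_add (Matrix.rank_mul_le_left U V) (Matrix.rank_mul_le_right P Q)
      _ ≤ D + t * (h - s + 1) := add_le_add hUb hQb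
  have hrn : S.rank + Module.finrank F (LinearMap.ker S.mulVecLin) = D + s * (D - k + 1) := by
    have h1 := LinearMap.finrank_range_add_finrank_ker S.mulVecLin
    rw [Module.finrank_fintype_fun_eq_card] at h1
    simpa [Matrix.rank, Fintype.card_sum, Fintype.card_prod] using h1
  exact ⟨hrS, by omega⟩
end
end

section
/- The number of solutions f ∈ F_{q^m}[x;σ]_{<k} of the FLRS root-finding system is at most q^{m(s−1)}: the root-finding matrix B has F_{q^m}-rank at least k−s+1, so its kernel has dimension at most s−1. -/
theorem stmt8 {F : Type*} [Field F] [Fintype F]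
    (σ : F ≃+* F) (k s dI : ℕ) (hs1 : 1 ≤ s) (hd : 0 < dI)
    (β : F)
    -- the evaluation points `σ^a(β)`, `a = 0,…,k−1`, are pairwise distinct
    (hβ : Function.Injective fun a : Fin k => (σ ^ (a : ℕ)) β)
    -- the polynomials `B_0^{(u)}` of degree ≤ s−1, the first one nonzero
    (B0 : Fin dI → Polynomial F)
    (hB0ne : B0 ⟨0, hd⟩ ≠ 0)
    (hdeg : ∀ u, (B0 u).natDegree ≤ s - 1)
    -- the root-finding matrix `B`: block lower triangular with diagonal blocks
    -- `b_{0,a} = (σ^{-a}(B_0^{(u)}(σ^a(β))))_u`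
    (B : Matrix (Fin k × Fin dI) (Fin k) F)
    (htri : ∀ (j : Fin k) (u : Fin dI) (c : Fin k), (j : ℕ) < (c : ℕ) → B (j, u) c = 0)
    (hdiag : ∀ (a : Fin k) (u : Fin dI),
      B (a, u) a = (σ ^ (a : ℕ)).symm ((B0 u).eval ((σ ^ (a : ℕ)) β))) :
    -- `rk(B) ≥ k − s + 1`, …
    k ≤ B.rank + (s - 1) ∧
    -- … so the root-finding system has at most `q^{m(s−1)} = |F|^{s-1}` solutions
    ∀ qv : Fin k × Fin dI → F,
      Set.ncard {fv : Fin k → F | B.mulVec fv = qv} ≤ Fintype.card F ^ (s - 1) := by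
  classical
  set u0 : Fin dI := ⟨0, hd⟩
  set p : Polynomial F := B0 u0 with hp
  -- the "good" indices, where the diagonal entry is nonzero
  set S : Finset (Fin k) :=
    Finset.univ.filter (fun a => ¬ (p.eval ((σ ^ (a : ℕ)) β) = 0)) with hS
  set T : Finset (Fin k) :=
    Finset.univ.filter (fun a => p.eval ((σ ^ (a : ℕ)) β) = 0) with hT
  have hST : T.card + S.card = k := by
    rw [hS, hT, Finset.card_filter_add_card_filter_not, Finset.card_univ,
      Fintype.card_fin]
  -- the bad set has at most `s-1` elements
  have hTcard : T.card ≤ s - 1 := by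
    have hmaps : ∀ a ∈ T, (σ ^ (a : ℕ)) β ∈ p.roots.toFinset := by
      intro a ha
      rw [Multiset.mem_toFinset, Polynomial.mem_roots hB0ne]
      exact (Finset.mem_filter.mp ha).2
    have hinj : Set.InjOn (fun a : Fin k => (σ ^ (a : ℕ)) β) T := hβ.injOn
    calc T.card ≤ p.roots.toFinset.card := Finset.card_le_card_of_injOn _ hmaps hinj
      _ ≤ Multiset.card p.roots := Multiset.toFinset_card_le _
      _ ≤ p.natDegree := p.card_roots'
      _ ≤ s - 1 := hdeg u0
  -- the submatrix on the good rows/columns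
  set n := S.card with hn
  let e : Fin n ≃o {x // x ∈ S} := S.orderIsoOfFin rfl
  let M : Matrix (Fin n) (Fin n) F := fun i j => B ((e i : Fin k), u0) ((e j : Fin k))
  have hMtri : M.BlockTriangular OrderDual.toDual := by
    intro i j hij
    exact htri _ _ _ (Fin.lt_iff_val_lt_val.mp (e.strictMono hij))
  have hMdiag : ∀ i, M i i ≠ 0 := by
    intro i
    have hmem : ¬ p.eval ((σ ^ ((e i : Fin k) : ℕ)) β) = 0 :=
      (Finset.mem_filter.mp (e i).2).2
    intro h0
    apply hmem
    have h1 : B ((e i : Fin k), u0) ((e i : Fin k)) = 0 := h0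
    rw [hdiag] at h1
    simpa using h1
  have hdet : IsUnit M.det := by
    rw [Matrix.det_of_lowerTriangular M hMtri]
    exact (Finset.prod_ne_zero_iff.mpr (fun i _ => hMdiag i)).isUnit
  -- rows of M are linearly independent, hence rows of B corresponding to S are
  have hliM : LinearIndependent F (fun i => M i) :=
    Matrix.linearIndependent_rows_iff_isUnit.mpr ((Matrix.isUnit_iff_isUnit_det M).mpr hdet)
  let r : Fin n → (Fin k → F) := fun i => B ((e i : Fin k), u0)
  have hlir : LinearIndependent F r := by
    refine LinearIndependent.of_comp
      (LinearMap.funLeft F F (fun j : Fin n => (e j : Fin k))) ?_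
    exact hliM
  -- rank bound
  have hrank : n ≤ B.rank := by
    have h1 : B.rank = Module.finrank F (Submodule.span F (Set.range B)) :=
      B.rank_eq_finrank_span_row
    have h2 : Submodule.span F (Set.range r) ≤ Submodule.span F (Set.range B) := by
      apply Submodule.span_mono
      rintro _ ⟨i, rfl⟩
      exact ⟨((e i : Fin k), u0), rfl⟩
    have h3 : Module.finrank F (Submodule.span F (Set.range r)) = n := by
      rw [finrank_span_eq_card hlir, Fintype.card_fin]
    rw [h1, ← h3]
    exact Submodule.finrank_mono h2
  have hmain : k ≤ B.rank + (s - 1) := by omega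
  refine ⟨hmain, ?_⟩
  -- kernel dimension bound
  have hrn : B.rank + Module.finrank F (LinearMap.ker B.mulVecLin) = k := by
    have := LinearMap.finrank_range_add_finrank_ker B.mulVecLin
    simpa [Matrix.rank] using this
  have hker : Module.finrank F (LinearMap.ker B.mulVecLin) ≤ s - 1 := by omega
  intro qv
  rcases Set.eq_empty_or_nonempty {fv : Fin k → F | B.mulVec fv = qv} with h | ⟨f0, hf0⟩
  · simp [h]
  · have hf0' : B.mulVec f0 = qv := hf0
    have hset : {fv : Fin k → F | B.mulVec fv = qv}
        = (fun v => f0 + v) '' (LinearMap.ker B.mulVecLin : Set (Fin k → F)) := by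
      ext fv
      simp only [Set.mem_setOf_eq, Set.mem_image, SetLike.mem_coe, LinearMap.mem_ker]
      constructor
      · intro hfv
        refine ⟨fv - f0, ?_, by abel⟩
        rw [map_sub]
        simp [Matrix.mulVecLin_apply, hfv, hf0']
      · rintro ⟨v, hv, rfl⟩
        have : B.mulVec v = 0 := by simpa [Matrix.mulVecLin_apply] using hv
        rw [Matrix.mulVec_add, this, hf0', add_zero]
    rw [hset, Set.ncard_image_of_injective _ (add_right_injective f0)]
    have : Set.ncard (LinearMap.ker B.mulVecLin : Set (Fin k → F))
        = Nat.card (LinearMap.ker B.mulVecLin) := by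
      rw [← Nat.card_coe_set_eq]
      rfl
    rw [this]
    haveI : Fintype (LinearMap.ker B.mulVecLin) := Fintype.ofFinite _
    rw [Nat.card_eq_fintype_card, Module.card_eq_pow_finrank (K := F)]
    exact Nat.pow_le_pow_right Fintype.card_pos hker
end

section
/- If each of d_I independent random vectors, drawn uniformly from the set of codewords of a fixed Reed–Solomon code over F_{q^m} (length k, dimension s ≤ k), is collected as a row of a matrix, then the probability that some column of the matrix is all-zero is at most k·(k/q^m)^{d_I}. Consequently, under the heuristic uniformity assumption, the failure probability of the probabilistic unique FLRS decoder satisfies P(rk(B) < k) ≲ k·(k/q^m)^{d_I}. -/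
open Finset

lemma aux_card10 {F : Type*} [Field F] [Fintype F] [DecidableEq F]
    (n : ℕ) (β : F) :
    Fintype.card {c : Fin (n+1) → F // ∑ j, c j * β ^ (j : ℕ) = 0}
      ≤ Fintype.card F ^ n := by
  have hcard : Fintype.card (Fin n → F) = Fintype.card F ^ n := by simp
  rw [← hcard]
  apply Fintype.card_le_of_injective (fun c => fun i => c.1 i.succ)
  rintro ⟨c, hc⟩ ⟨d, hd⟩ h
  simp only [Subtype.mk.injEq] at *
  ext j
  refine Fin.cases ?_ (fun i => congrFun h i) j
  rw [Fin.sum_univ_succ] at hc hd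
  simp only [Fin.val_zero, pow_zero, mul_one] at hc hd
  have hs : ∑ i : Fin n, c i.succ * β ^ (i.succ : ℕ)
      = ∑ i : Fin n, d i.succ * β ^ (i.succ : ℕ) := by
    refine Finset.sum_congr rfl fun i _ => ?_
    rw [congrFun h i]
  have hc0 : c 0 = -∑ i : Fin n, c i.succ * β ^ (i.succ : ℕ) := by
    linear_combination hc
  have hd0 : d 0 = -∑ i : Fin n, d i.succ * β ^ (i.succ : ℕ) := by
    linear_combination hd
  rw [hc0, hd0, hs]

theorem stmt10 {F : Type*} [Field F] [Fintype F] [DecidableEq F]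
    (k s dI : ℕ) (hs1 : 1 ≤ s) (hsk : s ≤ k) (hk1 : 1 ≤ k) (hdI : 1 ≤ dI)
    -- `k` pairwise distinct evaluation points of a Reed–Solomon code of
    -- length `k` and dimension `s`
    (x : Fin k → F) (hx : Function.Injective x) :
    -- a uniformly random tuple of `dI` codewords (given by coefficient vectors
    -- `g u : Fin s → F` of the message polynomials) has some all-zero column,
    -- i.e. a common root among the `k` evaluation points, with probability at
    -- most `k·(k/q^m)^{dI}`; consequently the heuristic failure probability of
    -- the probabilistic unique FLRS decoder obeys the same bound
    (Fintype.card {g : Fin dI → Fin s → F //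
        ∃ a : Fin k, ∀ u, ∑ j, g u j * x a ^ (j : ℕ) = 0} : ℚ) /
      ((Fintype.card F : ℚ) ^ (s * dI)) ≤
      (k : ℚ) * ((k : ℚ) / (Fintype.card F : ℚ)) ^ dI := by
  classical
  obtain ⟨n, rfl⟩ := Nat.exists_eq_succ_of_ne_zero (by omega : s ≠ 0)
  set q := Fintype.card F with hq
  have hq2 : 2 ≤ q := Fintype.one_lt_card
  have hqQ : (0:ℚ) < (q:ℚ) := by exact_mod_cast (by omega : 0 < q)
  -- union bound in ℕ
  have key : Fintype.card {g : Fin dI → Fin (n+1) → F //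
        ∃ a : Fin k, ∀ u, ∑ j, g u j * x a ^ (j : ℕ) = 0}
      ≤ k * (q ^ n) ^ dI := by
    have step1 : Fintype.card {g : Fin dI → Fin (n+1) → F //
          ∃ a : Fin k, ∀ u, ∑ j, g u j * x a ^ (j : ℕ) = 0}
        ≤ ∑ a : Fin k, Fintype.card {g : Fin dI → Fin (n+1) → F //
            ∀ u, ∑ j, g u j * x a ^ (j : ℕ) = 0} := by
      simp only [Fintype.card_subtype]
      refine le_trans (Finset.card_le_card ?_) Finset.card_biUnion_le
      intro g hg
      simp only [mem_filter, mem_univ, true_and] at hg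
      obtain ⟨a, ha⟩ := hg
      exact Finset.mem_biUnion.2 ⟨a, mem_univ a, by simp [ha]⟩
    refine step1.trans ?_
    have step2 : ∀ a : Fin k, Fintype.card {g : Fin dI → Fin (n+1) → F //
          ∀ u, ∑ j, g u j * x a ^ (j : ℕ) = 0} ≤ (q ^ n) ^ dI := by
      intro a
      rw [Fintype.card_congr (Equiv.subtypePiEquivPi
        (p := fun (_ : Fin dI) (c : Fin (n+1) → F) =>
          ∑ j, c j * x a ^ (j : ℕ) = 0))]
      rw [Fintype.card_pi]
      calc ∏ _u : Fin dI,
            Fintype.card {c : Fin (n+1) → F // ∑ j, c j * x a ^ (j : ℕ) = 0}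
          ≤ ∏ _u : Fin dI, q ^ n :=
            Finset.prod_le_prod (fun _ _ => Nat.zero_le _)
              (fun _ _ => aux_card10 n (x a))
        _ = (q ^ n) ^ dI := by simp
    calc ∑ a : Fin k, Fintype.card {g : Fin dI → Fin (n+1) → F //
            ∀ u, ∑ j, g u j * x a ^ (j : ℕ) = 0}
        ≤ ∑ _a : Fin k, (q ^ n) ^ dI := Finset.sum_le_sum fun a _ => step2 a
      _ = k * (q ^ n) ^ dI := by simp [mul_comm]
  -- pass to ℚ
  have keyQ : (Fintype.card {g : Fin dI → Fin (n+1) → F //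
        ∃ a : Fin k, ∀ u, ∑ j, g u j * x a ^ (j : ℕ) = 0} : ℚ)
      ≤ (k : ℚ) * (q:ℚ) ^ (n * dI) := by
    have := key
    push_cast [pow_mul]
    exact_mod_cast this
  have h1 : (Fintype.card {g : Fin dI → Fin (n+1) → F //
        ∃ a : Fin k, ∀ u, ∑ j, g u j * x a ^ (j : ℕ) = 0} : ℚ) /
      ((q:ℚ) ^ ((n+1) * dI)) ≤ (k:ℚ) / (q:ℚ) ^ dI := by
    rw [div_le_div_iff₀ (by positivity) (by positivity)]
    have hpow : (q:ℚ) ^ ((n+1) * dI) = (q:ℚ) ^ (n * dI) * (q:ℚ) ^ dI := by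
      rw [← pow_add]; ring_nf
    rw [hpow]
    calc (Fintype.card {g : Fin dI → Fin (n+1) → F //
            ∃ a : Fin k, ∀ u, ∑ j, g u j * x a ^ (j : ℕ) = 0} : ℚ) * (q:ℚ) ^ dI
        ≤ ((k : ℚ) * (q:ℚ) ^ (n * dI)) * (q:ℚ) ^ dI :=
          mul_le_mul_of_nonneg_right keyQ (by positivity)
      _ = (k:ℚ) * ((q:ℚ) ^ (n * dI) * (q:ℚ) ^ dI) := by ring
  refine h1.trans ?_
  rw [div_pow]
  have hrw : (k:ℚ) * ((k:ℚ) ^ dI / (q:ℚ) ^ dI) = ((k:ℚ) * (k:ℚ) ^ dI) / (q:ℚ) ^ dI := by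
    ring
  rw [hrw]
  have hk' : (1:ℚ) ≤ (k:ℚ) ^ dI :=
    by
    have : (1:ℚ) ≤ (k:ℚ) := by exact_mod_cast hk1
    exact one_le_pow₀ this
  gcongr
  nlinarith [hk', (by exact_mod_cast hk1 : (1:ℚ) ≤ (k:ℚ))]
end

section
/- For positive integers N, h, s, k, μ with 1 ≤ s ≤ h, setting D = ⌈(N(h−s+1)+s(k−1)+μ)/(s+1)⌉ guarantees both that the interpolation solution space has dimension d_I ≥ s(D−k+1) − t(h−s+1) ≥ μ and that D ≤ (N−t)(h−s+1), whenever t ≤ (s/(s+1))·((N(h−s+1)−k+1)/(h−s+1)) − μ/((s+1)(h−s+1)). -/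
theorem stmt11 (N h s k t D μ : ℕ) (hs1 : 1 ≤ s) (hsh : s ≤ h) (hk1 : 1 ≤ k)
    (hμ : 1 ≤ μ) (hkn : k ≤ N * h)
    -- `D = ⌈(N(h−s+1)+s(k−1)+μ)/(s+1)⌉`
    (hD : D = ⌈((N : ℚ) * ((h : ℚ) - s + 1) + s * ((k : ℚ) - 1) + μ) / ((s : ℚ) + 1)⌉₊)
    -- `t ≤ (s/(s+1))·((N(h−s+1)−k+1)/(h−s+1)) − μ/((s+1)(h−s+1))`
    (ht : (t : ℚ) ≤ ((s : ℚ) / (s + 1)) *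
        (((N : ℚ) * ((h : ℚ) - s + 1) - k + 1) / ((h : ℚ) - s + 1)) -
      (μ : ℚ) / (((s : ℚ) + 1) * ((h : ℚ) - s + 1))) :
    -- the interpolation solution space has dimension
    -- `d_I ≥ s(D−k+1) − t(h−s+1) ≥ μ` …
    (t : ℚ) * ((h : ℚ) - s + 1) + μ ≤ (s : ℚ) * ((D : ℚ) - k + 1) ∧
    -- … and the degree condition `D ≤ (N−t)(h−s+1)` holds
    (D : ℚ) ≤ ((N : ℚ) - t) * ((h : ℚ) - s + 1) := by
  set q : ℚ := (h : ℚ) - s + 1 with hqdef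
  have hq1 : (1 : ℚ) ≤ q := by
    have : (s : ℚ) ≤ h := by exact_mod_cast hsh
    simp [hqdef]; linarith
  have hq0 : (0 : ℚ) < q := by linarith
  have hs0 : (0 : ℚ) < (s : ℚ) + 1 := by positivity
  -- key inequality
  have key : (t : ℚ) * ((s : ℚ) + 1) * q ≤ (s : ℚ) * ((N : ℚ) * q - k + 1) - μ := by
    have h2 := mul_le_mul_of_nonneg_right ht (le_of_lt (mul_pos hs0 hq0))
    have hqne : q ≠ 0 := ne_of_gt hq0
    have hsne : (s : ℚ) + 1 ≠ 0 := ne_of_gt hs0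
    field_simp at h2
    nlinarith [h2]
  have hA : ((N : ℚ) * q + s * ((k : ℚ) - 1) + μ) / ((s : ℚ) + 1) ≤ (D : ℚ) := by
    rw [hD]; exact Nat.le_ceil _
  have hk0 : (1 : ℚ) ≤ (k : ℚ) := by exact_mod_cast hk1
  have hμ0 : (1 : ℚ) ≤ (μ : ℚ) := by exact_mod_cast hμ
  have hs1' : (1 : ℚ) ≤ (s : ℚ) := by exact_mod_cast hs1
  constructor
  · have hA' : (N : ℚ) * q + s * ((k : ℚ) - 1) + μ ≤ (D : ℚ) * ((s : ℚ) + 1) := by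
      rw [div_le_iff₀ hs0] at hA; exact hA
    nlinarith [key, hA']
  · -- t ≤ N as naturals
    have htN : t ≤ N := by
      have : (t : ℚ) ≤ (N : ℚ) := by nlinarith [key, mul_pos hq0 hs0, mul_nonneg (Nat.cast_nonneg N : (0:ℚ) ≤ (N:ℚ)) hq0.le, mul_nonneg (mul_nonneg (Nat.cast_nonneg s : (0:ℚ) ≤ (s:ℚ)) (Nat.cast_nonneg N : (0:ℚ) ≤ (N:ℚ))) hq0.le]
      exact_mod_cast this
    have hcast : (((N - t) * (h - s + 1) : ℕ) : ℚ) = ((N : ℚ) - t) * q := by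
      push_cast [Nat.cast_sub htN, Nat.cast_sub hsh]
      ring
    rw [hD, ← hcast]
    have : ((N : ℚ) * q + s * ((k : ℚ) - 1) + μ) / ((s : ℚ) + 1)
        ≤ (((N - t) * (h - s + 1) : ℕ) : ℚ) := by
      rw [hcast, div_le_iff₀ hs0]
      nlinarith [key]
    exact_mod_cast Nat.ceil_le.mpr this
end
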